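/- arXiv:2012.13306 — 2 statements merged into one kernel-verified Lean document; each statement's English description precedes it below -/
import Mathlib

section
/- Let h be a chaining functional of log-concave type. Then h is sub-multiplicative: for all a, b ∈ (0,1], h(a·b) ≤ h(a) + h(b). -/
open MeasureTheory

noncomputable section

/-- `f` is log-concave on `[0,∞)`. -/
def IsLogConcaveOn (f : ℝ → ℝ) : Prop :=
  ∀ x ∈ Set.Ici (0:ℝ), ∀ y ∈ Set.Ici (0:ℝ), ∀ t ∈ Set.Icc (0:ℝ) 1,
    f x ^ t * f y ^ (1 - t) ≤ f (t * x + (1 - t) * y)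

/-- `f` is a continuous, non-increasing, log-concave probability density on `[0,∞)`
normalized so that `f 0 = 1`. -/
structure IsChainingDensity (f : ℝ → ℝ) : Prop where
  nonneg : ∀ t : ℝ, 0 ≤ t → 0 ≤ f t
  continuousOn : ContinuousOn f (Set.Ici 0)
  antitoneOn : AntitoneOn f (Set.Ici 0)
  logConcave : IsLogConcaveOn f
  total : (∫ t in Set.Ioi (0:ℝ), f t) = 1
  normalized : f 0 = 1

/-- The complementary cumulative distribution function `F(s) = ∫_s^∞ f(t) dt`. -/
def ccdf (f : ℝ → ℝ) (s : ℝ) : ℝ := ∫ t in Set.Ioi s, f t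

/-- The chaining functional `h(p) = F⁻¹(p)`, defined on `(0,1]` as the least
`s ≥ 0` with `F(s) ≤ p`. -/
def chainFn (f : ℝ → ℝ) (p : ℝ) : ℝ := sInf {s : ℝ | 0 ≤ s ∧ ccdf f s ≤ p}

namespace ChainAux

variable {f : ℝ → ℝ}

/-- Core two-point inequality from log-concavity: moving the pair `(x,y)` inward
to `(x',y')` with the same sum increases the product. -/
lemma interp_core (hf : IsChainingDensity f) {x x' y' y : ℝ} (hx : 0 ≤ x)
    (h1 : x ≤ x') (h2 : x' ≤ y') (h3 : y' ≤ y) (hsum : x + y = x' + y') :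
    f x * f y ≤ f x' * f y' := by
  have hy : 0 ≤ y := hx.trans (h1.trans (h2.trans h3))
  have hx' : 0 ≤ x' := hx.trans h1
  have hy' : 0 ≤ y' := hx'.trans h2
  by_cases hfx : f x = 0
  · rw [hfx, zero_mul]
    exact mul_nonneg (hf.nonneg _ hx') (hf.nonneg _ hy')
  by_cases hfy : f y = 0
  · rw [hfy, mul_zero]
    exact mul_nonneg (hf.nonneg _ hx') (hf.nonneg _ hy')
  have hfx0 : 0 < f x := (hf.nonneg _ hx).lt_of_ne (Ne.symm hfx)
  have hfy0 : 0 < f y := (hf.nonneg _ hy).lt_of_ne (Ne.symm hfy)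
  rcases eq_or_lt_of_le (h1.trans (h2.trans h3)) with heq | hlt
  · have hxx' : x = x' := le_antisymm h1 (by linarith)
    have hyy' : y = y' := by linarith
    rw [hxx', hyy']
  · set θ : ℝ := (y - x') / (y - x) with hθdef
    have hyx : 0 < y - x := by linarith
    have hθ0 : 0 ≤ θ := div_nonneg (by linarith) (by linarith)
    have hθ1 : θ ≤ 1 := by
      rw [div_le_one hyx]; linarith
    have hθmul : θ * (y - x) = y - x' := div_mul_cancel₀ _ (ne_of_gt hyx)
    have hc1 : θ * x + (1 - θ) * y = x' := by
      rw [show θ * x + (1 - θ) * y = y - θ * (y - x) from by ring, hθmul]; ring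
    have hc2 : (1 - θ) * x + (1 - (1 - θ)) * y = y' := by
      rw [show (1 - θ) * x + (1 - (1 - θ)) * y = x + θ * (y - x) from by ring, hθmul]
      linarith
    have H1 := hf.logConcave x hx y hy θ ⟨hθ0, hθ1⟩
    have H2 := hf.logConcave x hx y hy (1 - θ) ⟨by linarith, by linarith⟩
    rw [hc1] at H1
    rw [hc2] at H2
    have key : f x * f y = (f x ^ θ * f y ^ (1 - θ)) * (f x ^ (1 - θ) * f y ^ (1 - (1 - θ))) := by
      have e1 : f x ^ θ * f x ^ (1 - θ) = f x := by
        rw [← Real.rpow_add hfx0]; simp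
      have e2 : f y ^ (1 - θ) * f y ^ (1 - (1 - θ)) = f y := by
        rw [← Real.rpow_add hfy0]; simp
      calc f x * f y = (f x ^ θ * f x ^ (1 - θ)) * (f y ^ (1 - θ) * f y ^ (1 - (1 - θ))) := by
            rw [e1, e2]
        _ = (f x ^ θ * f y ^ (1 - θ)) * (f x ^ (1 - θ) * f y ^ (1 - (1 - θ))) := by ring
    rw [key]
    exact mul_le_mul H1 H2
      (mul_nonneg (Real.rpow_nonneg hfx0.le _) (Real.rpow_nonneg hfy0.le _))
      (hf.nonneg _ hx')

/-- Symmetric version of the two-point inequality. -/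
lemma two_pt (hf : IsChainingDensity f) {x y u v : ℝ} (hx : 0 ≤ x)
    (hxu : x ≤ u) (hxv : x ≤ v) (huy : u ≤ y) (hvy : v ≤ y)
    (hsum : x + y = u + v) : f x * f y ≤ f u * f v := by
  rcases le_total u v with h | h
  · exact interp_core hf hx hxu h hvy hsum
  · rw [mul_comm (f u)]
    exact interp_core hf hx hxv h huy (by linarith)

lemma int_Ioi0 (hf : IsChainingDensity f) : IntegrableOn f (Set.Ioi 0) :=
  integrable_of_integral_eq_one hf.total

lemma int_Ioi (hf : IsChainingDensity f) {s : ℝ} (hs : 0 ≤ s) :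
    IntegrableOn f (Set.Ioi s) :=
  (int_Ioi0 hf).mono_set (Set.Ioi_subset_Ioi hs)

lemma int_Ioc (hf : IsChainingDensity f) {s r : ℝ} (hs : 0 ≤ s) :
    IntegrableOn f (Set.Ioc s r) :=
  (int_Ioi0 hf).mono_set (fun x hx => lt_of_le_of_lt hs hx.1)

lemma ccdf_nonneg (hf : IsChainingDensity f) {s : ℝ} (hs : 0 ≤ s) : 0 ≤ ccdf f s :=
  setIntegral_nonneg measurableSet_Ioi (fun x hx => hf.nonneg x (hs.trans (le_of_lt hx)))

lemma Ioc_nonneg (hf : IsChainingDensity f) {s r : ℝ} (hs : 0 ≤ s) :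
    0 ≤ ∫ x in Set.Ioc s r, f x :=
  setIntegral_nonneg measurableSet_Ioc (fun x hx => hf.nonneg x (hs.trans (le_of_lt hx.1)))

lemma ccdf_split (hf : IsChainingDensity f) {s r : ℝ} (hs : 0 ≤ s) (hsr : s ≤ r) :
    ccdf f s = (∫ x in Set.Ioc s r, f x) + ccdf f r := by
  rw [ccdf, ccdf, ← Set.Ioc_union_Ioi_eq_Ioi hsr,
    setIntegral_union Set.Ioc_disjoint_Ioi_same measurableSet_Ioi
      (int_Ioc hf hs) (int_Ioi hf (hs.trans hsr))]

/-- The key submultiplicativity of the tail `F(s+t) ≤ F(s) F(t)`. -/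
lemma ccdf_submul (hf : IsChainingDensity f) {s t : ℝ} (hs : 0 ≤ s) (ht : 0 ≤ t) :
    ccdf f (s + t) ≤ ccdf f s * ccdf f t := by
  by_cases hft : f t = 0
  · -- then f vanishes on Ioi (s+t), so the left side is 0
    have h0 : ccdf f (s + t) = 0 := by
      rw [ccdf]
      rw [setIntegral_congr_fun measurableSet_Ioi
        (fun u (hu : s + t < u) => le_antisymm
          (hft ▸ hf.antitoneOn ht (Set.mem_Ici.mpr (ht.trans (by linarith)))
            (by linarith))
          (hf.nonneg u (by linarith)) : Set.EqOn f (fun _ => (0:ℝ)) (Set.Ioi (s+t)))]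
      simp
    rw [h0]
    exact mul_nonneg (ccdf_nonneg hf hs) (ccdf_nonneg hf ht)
  · have hft0 : 0 < f t := (hf.nonneg t ht).lt_of_ne (Ne.symm hft)
    set c : ℝ := f (s + t) / f t with hc
    have hc0 : 0 ≤ c := div_nonneg (hf.nonneg _ (by linarith)) hft0.le
    have mp : MeasurePreserving (fun x : ℝ => x + s) volume volume :=
      measurePreserving_add_right volume s
    have emb : MeasurableEmbedding (fun x : ℝ => x + s) :=
      (MeasurableEquiv.addRight s).measurableEmbedding
    -- change of variables: F(s+t) = ∫_{Ioi t} f(u+s)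
    have pre1 : (fun x : ℝ => x + s) ⁻¹' Set.Ioi (s + t) = Set.Ioi t := by
      ext x
      simp only [Set.mem_preimage, Set.mem_Ioi]
      constructor <;> intro h <;> linarith
    have cov1 : ccdf f (s + t) = ∫ u in Set.Ioi t, f (u + s) := by
      rw [ccdf, ← mp.setIntegral_preimage_emb emb f (Set.Ioi (s + t)), pre1]
    have pre2 : (fun x : ℝ => x + s) ⁻¹' Set.Ioc s (s + t) = Set.Ioc 0 t := by
      ext x
      simp only [Set.mem_preimage, Set.mem_Ioc]
      constructor <;> intro h <;> exact ⟨by linarith [h.1], by linarith [h.2]⟩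
    have cov2 : (∫ x in Set.Ioc s (s + t), f x) = ∫ v in Set.Ioc 0 t, f (v + s) := by
      rw [← mp.setIntegral_preimage_emb emb f (Set.Ioc s (s + t)), pre2]
    -- integrability of the shifted function
    have intShift1 : IntegrableOn (fun u : ℝ => f (u + s)) (Set.Ioi t) := by
      have h1 := mp.restrict_preimage_emb emb (Set.Ioi (s + t))
      rw [pre1] at h1
      exact (h1.integrable_comp_emb emb).mpr (int_Ioi hf (by linarith))
    have intShift2 : IntegrableOn (fun v : ℝ => f (v + s)) (Set.Ioc 0 t) := by
      have h1 := mp.restrict_preimage_emb emb (Set.Ioc s (s + t))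
      rw [pre2] at h1
      exact (h1.integrable_comp_emb emb).mpr (int_Ioc hf hs)
    -- Step B : F(s+t) ≤ c F(t)
    have stepB : ccdf f (s + t) ≤ c * ccdf f t := by
      rw [cov1, ccdf, ← integral_const_mul]
      refine setIntegral_mono_on intShift1 ((int_Ioi hf ht).const_mul c)
        measurableSet_Ioi (fun u (hu : t < u) => ?_)
      have h2 := two_pt hf (x := t) (y := u + s) (u := s + t) (v := u)
        ht (by linarith) hu.le (by linarith) (by linarith) (by ring)
      rw [hc, div_mul_eq_mul_div, le_div_iff₀ hft0]
      linarith [h2]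
    -- Step C : c ∫_{Ioc 0 t} f ≤ ∫_{Ioc s (s+t)} f
    have stepC : c * (∫ v in Set.Ioc 0 t, f v) ≤ ∫ x in Set.Ioc s (s + t), f x := by
      rw [cov2, ← integral_const_mul]
      refine setIntegral_mono_on ((int_Ioc hf le_rfl).const_mul c) intShift2
        measurableSet_Ioc (fun v hv => ?_)
      obtain ⟨hv0, hvt⟩ := hv
      have h2 := two_pt hf (x := v) (y := s + t) (u := t) (v := v + s)
        hv0.le hvt (by linarith) (by linarith) (by linarith) (by ring)
      rw [hc, div_mul_eq_mul_div, div_le_iff₀ hft0]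
      linarith [h2]
    -- combine
    have splitS : ccdf f s = (∫ x in Set.Ioc s (s + t), f x) + ccdf f (s + t) :=
      ccdf_split hf hs (by linarith)
    have split0 : (1:ℝ) = (∫ v in Set.Ioc 0 t, f v) + ccdf f t := by
      rw [← hf.total]; exact ccdf_split hf le_rfl ht
    have hI : 0 ≤ ∫ v in Set.Ioc 0 t, f v := Ioc_nonneg hf le_rfl
    have hT : 0 ≤ ccdf f t := ccdf_nonneg hf ht
    have hA : 0 ≤ ccdf f (s + t) := ccdf_nonneg hf (by linarith)
    nlinarith [mul_le_mul_of_nonneg_right stepC hT, mul_le_mul_of_nonneg_right stepB hI]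

lemma ccdf_lipschitz (hf : IsChainingDensity f) {x y : ℝ} (hx : 0 ≤ x) (hxy : x ≤ y) :
    ccdf f x - ccdf f y ≤ y - x := by
  have hsplit := ccdf_split hf hx hxy
  have hle : (∫ u in Set.Ioc x y, f u) ≤ ∫ u in Set.Ioc x y, (1:ℝ) := by
    refine setIntegral_mono_on (int_Ioc hf hx)
      (integrableOn_const measure_Ioc_lt_top.ne) measurableSet_Ioc
      (fun u hu => ?_)
    have := hf.antitoneOn (Set.mem_Ici.mpr le_rfl)
      (Set.mem_Ici.mpr (hx.trans hu.1.le)) (hx.trans hu.1.le)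
    rw [hf.normalized] at this
    exact this
  have hconst : (∫ u in Set.Ioc x y, (1:ℝ)) = y - x := by
    simp [Real.volume_Ioc, ENNReal.toReal_ofReal (by linarith : (0:ℝ) ≤ y - x)]
    exact hxy
  linarith [hsplit, hle, hconst ▸ hle]

lemma ccdf_continuousOn (hf : IsChainingDensity f) :
    ContinuousOn (ccdf f) (Set.Ici 0) := by
  refine LipschitzOnWith.continuousOn (K := 1) ?_
  refine LipschitzOnWith.of_dist_le_mul (fun x hx y hy => ?_)
  rw [Real.dist_eq, Real.dist_eq, NNReal.coe_one, one_mul]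
  rcases le_total x y with h | h
  · have h1 := ccdf_lipschitz hf hx h
    have h2 : 0 ≤ ccdf f x - ccdf f y := by
      have := ccdf_split hf hx h
      have := Ioc_nonneg hf hx (r := y)
      linarith
    rw [abs_of_nonneg h2, abs_sub_comm, abs_of_nonneg (by linarith : (0:ℝ) ≤ y - x)]
    linarith
  · have h1 := ccdf_lipschitz hf hy h
    have h2 : 0 ≤ ccdf f y - ccdf f x := by
      have := ccdf_split hf hy h
      have := Ioc_nonneg hf hy (r := x)
      linarith
    rw [abs_sub_comm, abs_of_nonneg h2, abs_of_nonneg (by linarith : (0:ℝ) ≤ x - y)]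
    linarith

lemma chainFn_mem (hf : IsChainingDensity f) {p : ℝ} (hp : 0 < p) :
    0 ≤ chainFn f p ∧ ccdf f (chainFn f p) ≤ p := by
  set S : Set ℝ := {s : ℝ | 0 ≤ s ∧ ccdf f s ≤ p} with hS
  have hbdd : BddBelow S := ⟨0, fun x hx => hx.1⟩
  have hne : S.Nonempty := by
    have htend : Filter.Tendsto (fun i => ∫ x in (0:ℝ)..i, f x) Filter.atTop
        (nhds (∫ x in Set.Ioi (0:ℝ), f x)) :=
      intervalIntegral_tendsto_integral_Ioi 0 (int_Ioi0 hf) Filter.tendsto_id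
    rw [hf.total] at htend
    have hev : ∀ᶠ i in Filter.atTop, 1 - p < ∫ x in (0:ℝ)..i, f x :=
      htend.eventually (eventually_gt_nhds (by linarith))
    obtain ⟨i, hi1, hi0⟩ := (hev.and (Filter.eventually_ge_atTop (0:ℝ))).exists
    refine ⟨i, hi0, ?_⟩
    have hsplit : (1:ℝ) = (∫ v in Set.Ioc 0 i, f v) + ccdf f i := by
      rw [← hf.total]; exact ccdf_split hf le_rfl hi0
    rw [intervalIntegral.integral_of_le hi0] at hi1
    linarith
  have hclosed : IsClosed S := by
    have : S = Set.Ici 0 ∩ ccdf f ⁻¹' Set.Iic p := by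
      ext x; simp [hS, Set.mem_Ici, Set.mem_Iic]
    rw [this]
    exact (ccdf_continuousOn hf).preimage_isClosed_of_isClosed isClosed_Ici isClosed_Iic
  have := hclosed.csInf_mem hne hbdd
  exact this

end ChainAux

/-- a chaining functional of log-concave type is sub-multiplicative:
for all `a, b ∈ (0,1]`, `h(a·b) ≤ h(a) + h(b)`. -/
theorem chainFn_submultiplicative (f : ℝ → ℝ) (hf : IsChainingDensity f)
    (a b : ℝ) (ha : a ∈ Set.Ioc (0:ℝ) 1) (hb : b ∈ Set.Ioc (0:ℝ) 1) :
    chainFn f (a * b) ≤ chainFn f a + chainFn f b := by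
  obtain ⟨hsa, hFa⟩ := ChainAux.chainFn_mem hf ha.1
  obtain ⟨hsb, hFb⟩ := ChainAux.chainFn_mem hf hb.1
  have hkey := ChainAux.ccdf_submul hf hsa hsb
  have hab : ccdf f (chainFn f a + chainFn f b) ≤ a * b := by
    calc ccdf f (chainFn f a + chainFn f b) ≤ ccdf f (chainFn f a) * ccdf f (chainFn f b) := hkey
      _ ≤ a * b := mul_le_mul hFa hFb (ChainAux.ccdf_nonneg hf hsb) ha.1.le
  exact csInf_le ⟨0, fun x hx => hx.1⟩ ⟨add_nonneg hsa hsb, hab⟩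
end
end

section
/- Let (X,d) be a finite metric space, h a chaining functional of log-concave type, μ and ν probability measures on X, and r > 0. Then Σ_{x∈X} ν(x)·h(ν(B(x,2r))) ≤ Σ_{x∈X} ν(x)·h(μ(B(x,r))) + 1/e, with the conventions 0·∞ = 0 and h(0) := lim_{p→0⁺} h(p) ∈ (0,∞]. -/
open MeasureTheory

noncomputable section

open scoped ENNReal

/-- The extended (`[0,∞]`-valued) chaining functional: `h(p)` is the least `s ≥ 0`
with `F(s) ≤ p`, and `+∞` when no such `s` exists (in particular
`h(0) = lim_{p→0⁺} h(p) ∈ (0,∞]`). -/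
def chainFnE (f : ℝ → ℝ) (p : ℝ) : ℝ≥0∞ :=
  sInf {t : ℝ≥0∞ | ∃ s : ℝ, 0 ≤ s ∧ ccdf f s ≤ p ∧ t = ENNReal.ofReal s}

/-- A probability measure on a finite set, given by its point masses. -/
def IsProbOn {X : Type*} [Fintype X] (μ : X → ℝ) : Prop :=
  (∀ x, 0 ≤ μ x) ∧ (∑ x, μ x) = 1

/-- The mass `μ(B(x,r))` of the closed ball of radius `r` around `x`. -/
def ballMass {X : Type*} [MetricSpace X] [Fintype X] (μ : X → ℝ) (x : X) (r : ℝ) : ℝ :=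
  ∑ y ∈ Finset.univ.filter (fun y => dist x y ≤ r), μ y

/-- `∫₀^∞ h(μ(B(x,r))) dr`, valued in `[0,∞]`. -/
def Hint {X : Type*} [MetricSpace X] [Fintype X] (f : ℝ → ℝ) (μ : X → ℝ) (x : X) : ℝ≥0∞ :=
  ∫⁻ r in Set.Ioi (0:ℝ), chainFnE f (ballMass μ x r)

/-- The diameter of the finite metric space `X`. -/
def fdiam (X : Type*) [MetricSpace X] : ℝ := Metric.diam (Set.univ : Set X)

open Set

lemma xexp_le (x : ℝ) : x * Real.exp (-x) ≤ 1 / Real.exp 1 := by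
  rcases le_or_gt x 0 with hx | hx
  · have : x * Real.exp (-x) ≤ 0 :=
      mul_nonpos_iff.2 (Or.inr ⟨hx, (Real.exp_pos _).le⟩)
    exact this.trans (by positivity)
  · have h1 : x ≤ Real.exp (x - 1) := by
      have := Real.add_one_le_exp (x - 1); linarith
    have h2 : x * Real.exp (-x) ≤ Real.exp (x - 1) * Real.exp (-x) :=
      mul_le_mul_of_nonneg_right h1 (Real.exp_pos _).le
    calc x * Real.exp (-x) ≤ Real.exp (x - 1) * Real.exp (-x) := h2
      _ = Real.exp (-1) := by rw [← Real.exp_add]; ring_nf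
      _ = 1 / Real.exp 1 := by rw [Real.exp_neg]; ring

lemma log_chord {z : ℝ} (h1 : 1/2 ≤ z) (h2 : z ≤ 1) :
    -Real.log z ≤ 4 / Real.exp 1 * (1 - z) := by
  have hconc := strictConcaveOn_log_Ioi.concaveOn
  have hmem1 : (1/2 : ℝ) ∈ Set.Ioi (0:ℝ) := by norm_num
  have hmem2 : (1 : ℝ) ∈ Set.Ioi (0:ℝ) := by norm_num
  have ha : (0:ℝ) ≤ 2 * (1 - z) := by linarith
  have hb : (0:ℝ) ≤ 2 * z - 1 := by linarith
  have hab : 2 * (1 - z) + (2 * z - 1) = 1 := by ring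
  have := hconc.2 hmem1 hmem2 ha hb hab
  simp only [smul_eq_mul] at this
  have hz : 2 * (1 - z) * (1/2) + (2 * z - 1) * 1 = z := by ring
  rw [hz, Real.log_one, mul_zero, add_zero] at this
  have hlog2 : Real.log (1/2 : ℝ) = -Real.log 2 := by
    rw [one_div, Real.log_inv]
  rw [hlog2] at this
  have hnum : Real.log 2 * Real.exp 1 ≤ 2 := by
    have l2 := Real.log_two_lt_d9
    have e1 := Real.exp_one_lt_d9
    have l2p := Real.log_pos (by norm_num : (1:ℝ) < 2)
    have e1p := Real.exp_pos 1
    nlinarith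
  have hepos := Real.exp_pos 1
  have h2log2 : 2 * Real.log 2 ≤ 4 / Real.exp 1 := by
    rw [le_div_iff₀ hepos]; nlinarith
  have h1z : (0:ℝ) ≤ 1 - z := by linarith
  nlinarith [mul_le_mul_of_nonneg_right h2log2 h1z]

lemma endgame {K c s P : ℝ} (hK : 1 ≤ K) (hcpos : 0 < c) (hspos : 0 < s)
    (hPnn : 0 ≤ P) {v z : ℝ} (hvdef : v = c*s) (hzdef : z = Real.exp (-v))
    (hb1 : P ≤ (K/c)*z) (hbud : (K/c)*(1-z) + P ≤ 1) :
    s * P ≤ 1 / Real.exp 1 := by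
  have hKpos : (0:ℝ) < K := lt_of_lt_of_le one_pos hK
  have hv0 : 0 < v := by rw [hvdef]; positivity
  have hz0 : 0 < z := by rw [hzdef]; positivity
  have hz1 : z < 1 := by rw [hzdef]; exact Real.exp_lt_one_iff.mpr (by linarith)
  have hvz : v * z ≤ 1 / Real.exp 1 := by rw [hzdef]; exact xexp_le v
  have hsv : s = v / c := by rw [hvdef]; field_simp
  rcases le_total K c with hKc | hcK
  · -- c ≥ K ≥ 1
    have hc1 : (1:ℝ) ≤ c := le_trans hK hKc
    have hKc1 : K/c ≤ 1 := by rw [div_le_one hcpos]; exact hKc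
    have h1 : s*P ≤ s*((K/c)*z) := mul_le_mul_of_nonneg_left hb1 hspos.le
    have h2 : s*((K/c)*z) ≤ s*z := by
      have := mul_le_mul_of_nonneg_right hKc1 hz0.le
      nlinarith
    have h3 : s*z = (v*z)/c := by rw [hsv]; ring
    have h4 : (v*z)/c ≤ (1/Real.exp 1)/c := by gcongr
    calc s*P ≤ s*((K/c)*z) := h1
      _ ≤ s*z := h2
      _ = (v*z)/c := h3
      _ ≤ (1/Real.exp 1)/c := h4
      _ ≤ 1/Real.exp 1 := div_le_self (by positivity) hc1
  · -- c ≤ K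
    have hβ1 : (1:ℝ) ≤ K/c := by rw [le_div_iff₀ hcpos]; linarith
    have hβpos : (0:ℝ) < K/c := lt_of_lt_of_le one_pos hβ1
    have hw0 : 0 < 1 - z := by linarith
    have hPw : P ≤ 1 - (K/c)*(1-z) := by linarith
    have hβw : 0 ≤ 1 - (K/c)*(1-z) := le_trans hPnn hPw
    have hmid : s * P ≤ v * ((K/c) * (1 - (K/c)*(1-z))) := by
      have e1 : s*(1 - (K/c)*(1-z)) = (v/K)*((K/c)*(1-(K/c)*(1-z))) := by
        rw [hsv]
        field_simp
      have e2 : s*P ≤ s*(1-(K/c)*(1-z)) := mul_le_mul_of_nonneg_left hPw hspos.le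
      have e3 : (v/K) ≤ v := div_le_self hv0.le hK
      have e4 : 0 ≤ (K/c)*(1-(K/c)*(1-z)) := mul_nonneg hβpos.le hβw
      calc s*P ≤ s*(1-(K/c)*(1-z)) := e2
        _ = (v/K)*((K/c)*(1-(K/c)*(1-z))) := e1
        _ ≤ v*((K/c)*(1-(K/c)*(1-z))) := mul_le_mul_of_nonneg_right e3 e4
    rcases le_total (1/2 : ℝ) (1-z) with hw12 | hw12
    · -- w ≥ 1/2
      have hββ : (K/c)*(1 - (K/c)*(1-z)) ≤ z := by
        have hfac : 0 ≤ (K/c - 1) * ((1-z)*(K/c+1) - 1) := by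
          apply mul_nonneg (by linarith)
          nlinarith
        nlinarith
      calc s*P ≤ v*((K/c)*(1-(K/c)*(1-z))) := hmid
        _ ≤ v*z := mul_le_mul_of_nonneg_left hββ hv0.le
        _ ≤ 1/Real.exp 1 := hvz
    · -- w ≤ 1/2
      have h4w : (K/c)*(1 - (K/c)*(1-z)) ≤ 1/(4*(1-z)) := by
        rw [le_div_iff₀ (by linarith : (0:ℝ) < 4*(1-z))]
        nlinarith [sq_nonneg (2*(K/c)*(1-z) - 1)]
      have hz12 : 1/2 ≤ z := by linarith
      have hchord := log_chord hz12 hz1.le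
      have hveq : v = -Real.log z := by rw [hzdef, Real.log_exp]; ring
      have hvw : v ≤ 4/Real.exp 1 * (1-z) := by rw [hveq]; exact hchord
      calc s*P ≤ v*((K/c)*(1-(K/c)*(1-z))) := hmid
        _ ≤ v*(1/(4*(1-z))) := mul_le_mul_of_nonneg_left h4w hv0.le
        _ ≤ (4/Real.exp 1 * (1-z))*(1/(4*(1-z))) :=
            mul_le_mul_of_nonneg_right hvw (by positivity)
        _ = 1/Real.exp 1 := by
            field_simp

lemma lemA {f : ℝ → ℝ} (h0 : ∀ t, 0 ≤ t → 0 ≤ f t)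
    (hlc : ∀ a b : ℝ, 0 ≤ a → a ≤ b → 0 < b → f 0 ^ (1 - a/b) * f b ^ (a/b) ≤ f a)
    (hK : 1 ≤ f 0) (hanti : AntitoneOn f (Set.Ici 0))
    (hint : IntegrableOn f (Set.Ioi 0))
    (htot : (∫ t in Set.Ioi (0:ℝ), f t) ≤ 1) {s : ℝ} (hs : 0 ≤ s) :
    s * ∫ t in Set.Ioi s, f t ≤ 1 / Real.exp 1 := by
  rcases hs.eq_or_lt with rfl | hspos
  · rw [zero_mul]; positivity
  have hKpos : (0:ℝ) < f 0 := lt_of_lt_of_le one_pos hK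
  -- tail integrability
  have hint_tail : IntegrableOn f (Set.Ioi s) := hint.mono_set (Set.Ioi_subset_Ioi hs)
  have hint_head : IntegrableOn f (Set.Ioc 0 s) := hint.mono_set Set.Ioc_subset_Ioi_self
  have hPnn : 0 ≤ ∫ t in Set.Ioi s, f t :=
    setIntegral_nonneg measurableSet_Ioi (fun t ht => h0 t (hs.trans (le_of_lt ht)))
  by_cases hfs : f s ≤ 0
  · -- f s = 0, tail vanishes
    have hfs0 : f s = 0 := le_antisymm hfs (h0 s hs)
    have htail0 : ∀ u ∈ Set.Ioi s, f u = 0 := by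
      intro u hu
      have hu0 : 0 < u := lt_of_le_of_lt hs hu
      have h2 := hlc s u hs (le_of_lt hu) hu0
      rw [hfs0] at h2
      have hfact : 0 < f 0 ^ (1 - s/u) := Real.rpow_pos_of_pos hKpos _
      have h3 : f u ^ (s/u) ≤ 0 := by
        nlinarith [Real.rpow_nonneg (h0 u hu0.le) (s/u)]
      have h4 : f u ^ (s/u) = 0 :=
        le_antisymm h3 (Real.rpow_nonneg (h0 u hu0.le) _)
      have h5 := (Real.rpow_eq_zero (h0 u hu0.le) (by positivity : s/u ≠ 0)).mp h4
      exact h5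
    have : ∫ t in Set.Ioi s, f t = 0 := by
      rw [setIntegral_congr_fun measurableSet_Ioi htail0]
      simp
    rw [this, mul_zero]; positivity
  push_neg at hfs
  have hfsK : f s ≤ f 0 := hanti (Set.self_mem_Ici) (by exact hs) hs
  set K := f 0 with hKdef
  set c := Real.log (K / f s) / s with hcdef
  have hc : 0 ≤ c := by
    apply div_nonneg _ hspos.le
    apply Real.log_nonneg
    rw [le_div_iff₀ hfs]; linarith
  have hcs : c * s = Real.log K - Real.log (f s) := by
    rw [hcdef, div_mul_cancel₀ _ (ne_of_gt hspos), Real.log_div (ne_of_gt hKpos) (ne_of_gt hfs)]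
  -- claim 1 : on [0,s], K exp(-c u) ≤ f u
  have hcu : ∀ u : ℝ, c * u = (Real.log K - Real.log (f s)) * u / s := by
    intro u; rw [hcdef, Real.log_div (ne_of_gt hKpos) (ne_of_gt hfs)]; ring
  have claim1 : ∀ u, 0 ≤ u → u ≤ s → K * Real.exp (-(c*u)) ≤ f u := by
    intro u hu hus
    have h2 := hlc u s hu hus hspos
    have heq : K ^ (1 - u/s) * f s ^ (u/s)
        = Real.exp ((1 - u/s) * Real.log K + (u/s) * Real.log (f s)) := by
      rw [Real.rpow_def_of_pos hKpos, Real.rpow_def_of_pos hfs, ← Real.exp_add]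
      congr 1; ring
    have hlin : (1 - u/s) * Real.log K + (u/s) * Real.log (f s) = Real.log K + (-(c*u)) := by
      rw [hcu u]; field_simp; ring
    rw [heq, hlin, Real.exp_add, Real.exp_log hKpos] at h2
    exact h2
  -- claim 2 : on [s,∞), f u ≤ K exp(-c u)
  have claim2 : ∀ u, s ≤ u → f u ≤ K * Real.exp (-(c*u)) := by
    intro u hsu'
    rcases eq_or_lt_of_le hsu' with heqq | hsu
    · subst heqq
      have : K * Real.exp (-(c*s)) = f s := by
        rw [show -(c*s) = Real.log (f s) - Real.log K by rw [hcs]; ring,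
          Real.exp_sub, Real.exp_log hfs, Real.exp_log hKpos]
        field_simp
      rw [this]
    have hu0 : 0 < u := hspos.trans hsu
    rcases le_or_gt (f u) 0 with hfu | hfu
    · exact hfu.trans (by positivity)
    have h2 := hlc s u hs hsu.le hu0
    have hlhs : K ^ (1 - s/u) * f u ^ (s/u)
        = Real.exp ((1 - s/u) * Real.log K + (s/u) * Real.log (f u)) := by
      rw [Real.rpow_def_of_pos hKpos, Real.rpow_def_of_pos hfu, ← Real.exp_add]
      congr 1; ring
    rw [hlhs] at h2
    have h3 : (1 - s/u) * Real.log K + (s/u) * Real.log (f u) ≤ Real.log (f s) :=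
      Real.exp_le_exp.mp (by rw [Real.exp_log hfs]; exact h2)
    have hmul := mul_le_mul_of_nonneg_left h3 hu0.le
    have hexp : u * ((1 - s/u) * Real.log K + (s/u) * Real.log (f u))
        = (u - s) * Real.log K + s * Real.log (f u) := by
      field_simp
    rw [hexp] at hmul
    have h4 : Real.log (f u) ≤ Real.log K - c * u := by
      rw [hcu u]
      have hdiv := (div_le_iff₀ hspos).mpr
        (show (Real.log K - Real.log (f s)) * u ≤ (Real.log K - Real.log (f u)) * s by nlinarith)
      linarith
    calc f u = Real.exp (Real.log (f u)) := (Real.exp_log hfu).symm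
      _ ≤ Real.exp (Real.log K - c * u) := Real.exp_le_exp.mpr h4
      _ = K * Real.exp (-(c*u)) := by
          rw [show Real.log K - c*u = Real.log K + (-(c*u)) by ring, Real.exp_add,
            Real.exp_log hKpos]
  -- exponential integrals
  have hsplit : (∫ t in Set.Ioc 0 s, f t) + (∫ t in Set.Ioi s, f t) = ∫ t in Set.Ioi 0, f t := by
    rw [← setIntegral_union (Set.Ioc_disjoint_Ioi le_rfl) measurableSet_Ioi hint_head hint_tail,
      Set.Ioc_union_Ioi_eq_Ioi hs]
  set P := ∫ t in Set.Ioi s, f t with hPdef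
  rcases eq_or_lt_of_le hc with hc0 | hcpos
  · -- c = 0 : f s = K ≥ 1
    have hfsK' : K = f s := by
      have hl : Real.log K - Real.log (f s) = 0 := by rw [← hcs, ← hc0]; ring
      have : Real.log K = Real.log (f s) := by linarith
      calc K = Real.exp (Real.log K) := (Real.exp_log hKpos).symm
        _ = Real.exp (Real.log (f s)) := by rw [this]
        _ = f s := Real.exp_log hfs
    have hone : ∀ u ∈ Set.Ioc 0 s, (1:ℝ) ≤ f u := by
      intro u hu
      have := hanti (show u ∈ Set.Ici (0:ℝ) from hu.1.le) (show s ∈ Set.Ici (0:ℝ) from hs) hu.2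
      linarith [hK, hfsK' ▸ this]
    have hhead : s ≤ ∫ t in Set.Ioc 0 s, f t := by
      have h1 : ∫ _t in Set.Ioc (0:ℝ) s, (1:ℝ) ≤ ∫ t in Set.Ioc 0 s, f t :=
        setIntegral_mono_on (integrableOn_const measure_Ioc_lt_top.ne)
          hint_head measurableSet_Ioc hone
      rwa [setIntegral_const, Real.volume_real_Ioc, smul_eq_mul, mul_one, sub_zero,
        max_eq_left hs] at h1
    have hP1 : P ≤ 1 - s := by linarith
    have he4 : Real.exp 1 ≤ 4 := by
      have := Real.exp_one_lt_d9; linarith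
    have h14 : 1/4 ≤ 1/Real.exp 1 :=
      one_div_le_one_div_of_le (Real.exp_pos 1) he4
    nlinarith [sq_nonneg (s - 1/2), mul_le_mul_of_nonneg_left hP1 hspos.le]
  · -- c > 0
    have hderivF : ∀ u : ℝ, HasDerivAt (fun u => -(K/c) * Real.exp (-(c*u)))
        (K * Real.exp (-(c*u))) u := by
      intro u
      have h1 : HasDerivAt (fun u : ℝ => -(c*u)) (-c) u := by
        simpa using ((hasDerivAt_id u).const_mul (-c))
      have h2 := (h1.exp).const_mul (-(K/c))
      exact h2.congr_deriv (by
        rw [mul_comm (Real.exp _) (-c), ← mul_assoc, neg_mul_neg, div_mul_cancel₀ _ hcpos.ne'])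
    have hterm : Filter.Tendsto (fun u => -(K/c) * Real.exp (-(c*u))) Filter.atTop (nhds 0) := by
      have h1 : Filter.Tendsto (fun u : ℝ => c*u) Filter.atTop Filter.atTop :=
        Filter.Tendsto.const_mul_atTop hcpos Filter.tendsto_id
      have h2 : Filter.Tendsto (fun u : ℝ => Real.exp (-(c*u))) Filter.atTop (nhds 0) :=
        Real.tendsto_exp_neg_atTop_nhds_zero.comp h1
      have h3 := h2.const_mul (-(K/c))
      simpa using h3
    have hEtail : IntegrableOn (fun u => K * Real.exp (-(c*u))) (Set.Ioi s) := by
      have := (exp_neg_integrableOn_Ioi s hcpos).const_mul K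
      simpa [neg_mul, IntegrableOn] using this
    have tailE : ∫ u in Set.Ioi s, K * Real.exp (-(c*u)) = (K/c) * Real.exp (-(c*s)) := by
      rw [integral_Ioi_of_hasDerivAt_of_tendsto' (fun x _ => hderivF x) hEtail hterm]
      ring
    have hEcont : Continuous fun u : ℝ => K * Real.exp (-(c*u)) :=
      continuous_const.mul (Real.continuous_exp.comp ((continuous_const.mul continuous_id).neg))
    have headE : ∫ u in Set.Ioc 0 s, K * Real.exp (-(c*u))
        = (K/c) * (1 - Real.exp (-(c*s))) := by
      rw [← intervalIntegral.integral_of_le hs]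
      rw [intervalIntegral.integral_eq_sub_of_hasDerivAt (fun x _ => hderivF x)
        (hEcont.intervalIntegrable 0 s)]
      simp [Real.exp_zero]
      field_simp
      ring
    have hb1 : P ≤ (K/c) * Real.exp (-(c*s)) := by
      rw [← tailE, hPdef]
      exact setIntegral_mono_on hint_tail hEtail measurableSet_Ioi
        (fun u hu => claim2 u (le_of_lt hu))
    have hb2 : (K/c)*(1 - Real.exp (-(c*s))) ≤ ∫ t in Set.Ioc 0 s, f t := by
      rw [← headE]
      exact setIntegral_mono_on (hEcont.integrableOn_Ioc) hint_head measurableSet_Ioc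
        (fun u hu => claim1 u hu.1.le hu.2)
    have hbudget : (K/c)*(1 - Real.exp (-(c*s))) + P ≤ 1 := by linarith
    exact endgame hK hcpos hspos hPnn rfl rfl hb1 hbudget

-- translation lemmas
lemma indicator_shift (f : ℝ → ℝ) (s t : ℝ) :
    (Set.Ioi t).indicator (fun u => f (s + u)) =
      fun u => (Set.Ioi (s + t)).indicator f (s + u) := by
  funext u
  by_cases h : t < u
  · rw [Set.indicator_of_mem (Set.mem_Ioi.mpr h),
      Set.indicator_of_mem (Set.mem_Ioi.mpr (by linarith))]
  · rw [Set.indicator_of_notMem (fun hc => h (Set.mem_Ioi.mp hc)),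
      Set.indicator_of_notMem (fun hc => h (by have := Set.mem_Ioi.mp hc; linarith))]

lemma integral_shift (f : ℝ → ℝ) (s t : ℝ) :
    ∫ u in Set.Ioi t, f (s + u) = ∫ u in Set.Ioi (s + t), f u := by
  rw [← integral_indicator measurableSet_Ioi, ← integral_indicator measurableSet_Ioi,
    indicator_shift]
  exact integral_add_left_eq_self ((Set.Ioi (s + t)).indicator f) s

lemma integrableOn_shift {f : ℝ → ℝ} (s t : ℝ) (h : IntegrableOn f (Set.Ioi (s + t))) :
    IntegrableOn (fun u => f (s + u)) (Set.Ioi t) := by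
  rw [← integrable_indicator_iff measurableSet_Ioi, indicator_shift]
  rw [← integrable_indicator_iff measurableSet_Ioi] at h
  have hemb : MeasurableEmbedding (fun u : ℝ => s + u) :=
    (MeasurableEquiv.addLeft s).measurableEmbedding
  have : MeasurePreserving (fun u : ℝ => s + u) volume volume :=
    measurePreserving_add_left volume s
  exact (this.integrable_comp_emb hemb).mpr h

-- two-point log-concavity, shifted form
lemma two_point_shift {f : ℝ → ℝ} (hlc : IsLogConcaveOn f) {s : ℝ} (hs : 0 ≤ s)
    {a b : ℝ} (ha : 0 ≤ a) (hab : a ≤ b) (hb : 0 < b) :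
    f s ^ (1 - a/b) * f (s + b) ^ (a/b) ≤ f (s + a) := by
  have ht : (1 - a/b) ∈ Set.Icc (0:ℝ) 1 := by
    constructor
    · have : a/b ≤ 1 := by rw [div_le_one hb]; exact hab
      linarith
    · have : 0 ≤ a/b := by positivity
      linarith
  have h := hlc s hs (s + b) (by simp; linarith : s + b ∈ Set.Ici (0:ℝ)) _ ht
  have harg : (1 - a/b) * s + (1 - (1 - a/b)) * (s + b) = s + a := by
    field_simp
    ring
  rw [harg] at h
  convert h using 3
  ring

lemma two_point {f : ℝ → ℝ} (hlc : IsLogConcaveOn f)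
    {a b : ℝ} (ha : 0 ≤ a) (hab : a ≤ b) (hb : 0 < b) :
    f 0 ^ (1 - a/b) * f b ^ (a/b) ≤ f a := by
  have := two_point_shift hlc le_rfl ha hab hb
  simpa using this

section chaining
variable {f : ℝ → ℝ} (hcd : IsChainingDensity f)
include hcd

lemma hcd_int : IntegrableOn f (Set.Ioi (0:ℝ)) := by
  by_contra hcon
  have := integral_undef hcon
  rw [hcd.total] at this
  norm_num at this

lemma hcd_int' {s : ℝ} (hs : 0 ≤ s) : IntegrableOn f (Set.Ioi s) :=
  (hcd_int hcd).mono_set (Set.Ioi_subset_Ioi hs)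

lemma f_le_one {t : ℝ} (ht : 0 ≤ t) : f t ≤ 1 := by
  have := hcd.antitoneOn (Set.self_mem_Ici) (show t ∈ Set.Ici (0:ℝ) from ht) ht
  rw [hcd.normalized] at this
  exact this

lemma ccdf_nonneg {s : ℝ} (hs : 0 ≤ s) : 0 ≤ ccdf f s :=
  setIntegral_nonneg measurableSet_Ioi (fun t ht => hcd.nonneg t (hs.trans (le_of_lt ht)))

lemma ccdf_anti {s s' : ℝ} (hs : 0 ≤ s) (hss' : s ≤ s') : ccdf f s' ≤ ccdf f s := by
  unfold ccdf
  rw [show Set.Ioi s = Set.Ioc s s' ∪ Set.Ioi s' from (Set.Ioc_union_Ioi_eq_Ioi hss').symm,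
    setIntegral_union (Set.Ioc_disjoint_Ioi le_rfl) measurableSet_Ioi
      ((hcd_int' hcd hs).mono_set Set.Ioc_subset_Ioi_self) (hcd_int' hcd (hs.trans hss'))]
  have : 0 ≤ ∫ t in Set.Ioc s s', f t :=
    setIntegral_nonneg measurableSet_Ioc (fun t ht => hcd.nonneg t (hs.trans (le_of_lt ht.1)))
  linarith

lemma ccdf_lip {s s' : ℝ} (hs : 0 ≤ s) (hss' : s ≤ s') : ccdf f s ≤ ccdf f s' + (s' - s) := by
  unfold ccdf
  rw [show Set.Ioi s = Set.Ioc s s' ∪ Set.Ioi s' from (Set.Ioc_union_Ioi_eq_Ioi hss').symm,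
    setIntegral_union (Set.Ioc_disjoint_Ioi le_rfl) measurableSet_Ioi
      ((hcd_int' hcd hs).mono_set Set.Ioc_subset_Ioi_self) (hcd_int' hcd (hs.trans hss'))]
  have h1 : ∫ t in Set.Ioc s s', f t ≤ ∫ _t in Set.Ioc s s', (1:ℝ) := by
    apply setIntegral_mono_on ((hcd_int' hcd hs).mono_set Set.Ioc_subset_Ioi_self)
      (integrableOn_const measure_Ioc_lt_top.ne) measurableSet_Ioc
    intro t ht
    exact f_le_one hcd (hs.trans ht.1.le)
  rw [setIntegral_const, Real.volume_real_Ioc, smul_eq_mul, mul_one,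
    max_eq_left (by linarith)] at h1
  linarith

lemma ccdf_le_one {s : ℝ} (hs : 0 ≤ s) : ccdf f s ≤ 1 := by
  have := ccdf_anti hcd le_rfl hs
  unfold ccdf at this
  rw [hcd.total] at this
  exact this

lemma super_mul {x y : ℝ} (hx : 0 ≤ x) (hy : 0 ≤ y) : f (x + y) ≤ f x * f y := by
  rcases eq_or_lt_of_le (by linarith : (0:ℝ) ≤ x + y) with h0 | hpos
  · have hx0 : x = 0 := by linarith
    have hy0 : y = 0 := by linarith
    rw [hx0, hy0, add_zero, hcd.normalized]
    norm_num
  have h1 := two_point hcd.logConcave hx (by linarith : x ≤ x + y) hpos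
  have h2 := two_point hcd.logConcave hy (by linarith : y ≤ x + y) hpos
  rw [hcd.normalized, Real.one_rpow, one_mul] at h1 h2
  have hfb : 0 ≤ f (x + y) := hcd.nonneg _ hpos.le
  have hmul := mul_le_mul h1 h2 (Real.rpow_nonneg hfb _) (hcd.nonneg x hx)
  rw [← Real.rpow_add' hfb (by field_simp; norm_num : x/(x+y) + y/(x+y) ≠ 0)] at hmul
  rw [show x/(x+y) + y/(x+y) = 1 by field_simp, Real.rpow_one] at hmul
  exact hmul

lemma ccdf_le_f {s : ℝ} (hs : 0 ≤ s) : ccdf f s ≤ f s := by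
  unfold ccdf
  have h1 : ∫ t in Set.Ioi s, f t ≤ ∫ t in Set.Ioi s, f s * f (-s + t) := by
    apply setIntegral_mono_on (hcd_int' hcd hs) _ measurableSet_Ioi
    · intro t ht
      have h2 := super_mul hcd hs (by linarith [Set.mem_Ioi.mp ht] : (0:ℝ) ≤ -s + t)
      rw [show s + (-s + t) = t by ring] at h2
      exact h2
    · apply Integrable.const_mul
      apply integrableOn_shift
      rw [show -s + s = (0:ℝ) by ring]
      exact hcd_int hcd
  rw [integral_const_mul, integral_shift, show -s + s = (0:ℝ) by ring, hcd.total, mul_one] at h1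
  exact h1

end chaining

section chaining2
variable {f : ℝ → ℝ} (hcd : IsChainingDensity f)
include hcd

lemma sF_le {s : ℝ} (hs : 0 ≤ s) : s * ccdf f s ≤ 1 / Real.exp 1 := by
  apply lemA hcd.nonneg (fun a b ha hab hb => two_point hcd.logConcave ha hab hb)
    (le_of_eq hcd.normalized.symm) hcd.antitoneOn (hcd_int hcd) (le_of_eq hcd.total) hs

lemma lemB {s S : ℝ} (hs : 0 ≤ s) (hsS : s ≤ S) :
    (S - s) * ccdf f S ≤ ccdf f s * (1 / Real.exp 1) := by
  rcases eq_or_lt_of_le (ccdf_nonneg hcd hs) with hP0 | hPpos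
  · -- ccdf f s = 0 : tail also 0
    have h1 : ccdf f S ≤ ccdf f s := ccdf_anti hcd hs hsS
    have h2 : 0 ≤ ccdf f S := ccdf_nonneg hcd (hs.trans hsS)
    have h3 : ccdf f S = 0 := le_antisymm (by linarith) h2
    simp [h3, ← hP0]
  -- apply lemA to the normalized shift g = f(s+·)/ccdf f s
  have hPnn := hPpos.le
  have hfsP : ccdf f s ≤ f s := ccdf_le_f hcd hs
  have hfspos : 0 < f s := lt_of_lt_of_le hPpos hfsP
  have hg0 : ∀ u : ℝ, 0 ≤ u → 0 ≤ f (s + u) / ccdf f s := by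
    intro u hu
    exact div_nonneg (hcd.nonneg _ (by linarith)) hPnn
  have hglc : ∀ a b : ℝ, 0 ≤ a → a ≤ b → 0 < b →
      (f (s + 0) / ccdf f s) ^ (1 - a/b) * (f (s + b) / ccdf f s) ^ (a/b)
        ≤ f (s + a) / ccdf f s := by
    intro a b ha hab hb
    have h := two_point_shift hcd.logConcave hs ha hab hb
    rw [add_zero]
    rw [Real.div_rpow (hcd.nonneg s hs) hPnn, Real.div_rpow (hcd.nonneg _ (by linarith)) hPnn,
      div_mul_div_comm, ← Real.rpow_add hPpos]
    rw [show (1 - a/b) + a/b = 1 by ring, Real.rpow_one]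
    exact (div_le_div_iff_of_pos_right hPpos).mpr h
  have hganti : AntitoneOn (fun u => f (s + u) / ccdf f s) (Set.Ici 0) := by
    intro u hu u' hu' huu'
    exact (div_le_div_iff_of_pos_right hPpos).mpr
      (hcd.antitoneOn (by simp; linarith [hu.out] : s + u ∈ Set.Ici (0:ℝ))
        (by simp; linarith [hu'.out] : s + u' ∈ Set.Ici (0:ℝ)) (by linarith))
  have hgK : 1 ≤ f (s + 0) / ccdf f s := by
    rw [add_zero, le_div_iff₀ hPpos, one_mul]
    exact hfsP
  have hgint : IntegrableOn (fun u => f (s + u) / ccdf f s) (Set.Ioi (0:ℝ)) := by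
    apply Integrable.div_const
    apply integrableOn_shift
    rw [add_zero]
    exact hcd_int' hcd hs
  have hgtot : (∫ t in Set.Ioi (0:ℝ), f (s + t) / ccdf f s) ≤ 1 := by
    rw [integral_div, integral_shift, add_zero]
    rw [div_le_one hPpos]
    exact le_rfl
  have hA := lemA hg0 hglc hgK hganti hgint hgtot (by linarith : (0:ℝ) ≤ S - s)
  rw [integral_div, integral_shift, show s + (S - s) = S by ring] at hA
  have hA2 := mul_le_mul_of_nonneg_right hA hPnn
  have heq : ((S - s) * (ccdf f S / ccdf f s)) * ccdf f s = (S - s) * ccdf f S := by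
    field_simp
  calc (S - s) * ccdf f S = ((S - s) * (ccdf f S / ccdf f s)) * ccdf f s := heq.symm
    _ ≤ (1 / Real.exp 1) * ccdf f s := hA2
    _ = ccdf f s * (1 / Real.exp 1) := mul_comm _ _

end chaining2

section chaining3
variable {f : ℝ → ℝ} (hcd : IsChainingDensity f)

lemma chainFnE_anti {p q : ℝ} (hpq : p ≤ q) : chainFnE f q ≤ chainFnE f p := by
  apply sInf_le_sInf
  rintro t ⟨s, h1, h2, rfl⟩
  exact ⟨s, h1, h2.trans hpq, rfl⟩

include hcd

lemma exists_tail_le {p : ℝ} (hp : 0 < p) : ∃ s, 0 ≤ s ∧ ccdf f s ≤ p := by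
  have he := Real.exp_pos 1
  set s0 : ℝ := 1/(Real.exp 1 * p) + 1 with hs0def
  have hs0 : 0 < s0 := by positivity
  refine ⟨s0, hs0.le, ?_⟩
  have h1 := sF_le hcd hs0.le
  have h2 : ccdf f s0 ≤ (1/Real.exp 1)/s0 := by
    rw [le_div_iff₀ hs0]
    linarith [mul_comm s0 (ccdf f s0)]
  have h3 : (1/Real.exp 1) ≤ p * s0 := by
    rw [hs0def]
    have heq : p * (1/(Real.exp 1 * p) + 1) = 1/Real.exp 1 + p := by
      field_simp
    rw [heq]
    linarith
  have h4 : (1/Real.exp 1)/s0 ≤ p := by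
    rw [div_le_iff₀ hs0]
    linarith [mul_comm p s0]
  linarith

lemma chainFn_nonneg {p : ℝ} (hp : 0 < p) : 0 ≤ chainFn f p := by
  obtain ⟨s, hs1, hs2⟩ := exists_tail_le hcd hp
  exact le_csInf ⟨s, hs1, hs2⟩ (fun x hx => hx.1)

omit hcd in
lemma chainFn_min {p s : ℝ} (hs : 0 ≤ s) (h : ccdf f s ≤ p) : chainFn f p ≤ s :=
  csInf_le ⟨0, fun x hx => hx.1⟩ ⟨hs, h⟩

lemma chainFn_spec {p : ℝ} (hp : 0 < p) : ccdf f (chainFn f p) ≤ p := by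
  obtain ⟨s, hs1, hs2⟩ := exists_tail_le hcd hp
  have hne : {s : ℝ | 0 ≤ s ∧ ccdf f s ≤ p}.Nonempty := ⟨s, hs1, hs2⟩
  apply le_of_forall_pos_le_add
  intro ε hε
  obtain ⟨a, haT, halt⟩ := Real.lt_sInf_add_pos hne hε
  have h1 : chainFn f p ≤ a := csInf_le ⟨0, fun x hx => hx.1⟩ haT
  have h2 := ccdf_lip hcd (chainFn_nonneg hcd hp) h1
  have halt' : a < chainFn f p + ε := halt
  linarith [haT.2]

lemma chainFn_ge {p : ℝ} (hp : 0 < p) (hS : 0 < chainFn f p) :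
    p ≤ ccdf f (chainFn f p) := by
  by_contra hcon
  push_neg at hcon
  set S := chainFn f p with hSdef
  set δ := min S ((p - ccdf f S)/2) with hδdef
  have hδ0 : 0 < δ := lt_min hS (by linarith)
  have hδS : δ ≤ S := min_le_left _ _
  have h1 : ccdf f (S - δ) ≤ ccdf f S + δ := by
    have := ccdf_lip hcd (by linarith : (0:ℝ) ≤ S - δ) (by linarith : S - δ ≤ S)
    linarith
  have h2 : ccdf f (S - δ) ≤ p := by
    have : δ ≤ (p - ccdf f S)/2 := min_le_right _ _
    linarith
  have h3 : S ≤ S - δ := chainFn_min (by linarith) h2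
  linarith

lemma chainFnE_eq {p : ℝ} (hp : 0 < p) :
    chainFnE f p = ENNReal.ofReal (chainFn f p) := by
  apply le_antisymm
  · exact sInf_le ⟨chainFn f p, chainFn_nonneg hcd hp, chainFn_spec hcd hp, rfl⟩
  · apply le_sInf
    rintro t ⟨s', hs', hFs', rfl⟩
    exact ENNReal.ofReal_le_ofReal (chainFn_min hs' hFs')

lemma keyK {A B : ℝ} (hA : 0 ≤ A) (hB : 0 ≤ B) :
    ENNReal.ofReal A * (chainFnE f A - chainFnE f B) ≤
      ENNReal.ofReal (B * (1/Real.exp 1)) := by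
  rcases eq_or_lt_of_le hA with hA0 | hApos
  · rw [← hA0, ENNReal.ofReal_zero, zero_mul]
    exact zero_le
  rcases le_or_gt (chainFnE f A) (chainFnE f B) with hle | hlt
  · rw [tsub_eq_zero_of_le hle, mul_zero]
    exact zero_le
  have hBpos : 0 < B := by
    rcases eq_or_lt_of_le hB with h | h
    · exfalso
      exact not_le.mpr hlt (chainFnE_anti (by linarith : B ≤ A))
    · exact h
  rw [chainFnE_eq hcd hApos, chainFnE_eq hcd hBpos] at hlt ⊢
  have hsnn := chainFn_nonneg hcd hBpos
  have hsS : chainFn f B < chainFn f A :=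
    (ENNReal.ofReal_lt_ofReal_iff_of_nonneg hsnn).mp hlt
  have hSpos : 0 < chainFn f A := lt_of_le_of_lt hsnn hsS
  have hFS : A ≤ ccdf f (chainFn f A) := chainFn_ge hcd hApos hSpos
  have hFs : ccdf f (chainFn f B) ≤ B := chainFn_spec hcd hBpos
  have hBB := lemB hcd hsnn hsS.le
  have hreal : A * (chainFn f A - chainFn f B) ≤ B * (1/Real.exp 1) := by
    have h1 : A * (chainFn f A - chainFn f B)
        ≤ ccdf f (chainFn f A) * (chainFn f A - chainFn f B) :=
      mul_le_mul_of_nonneg_right hFS (by linarith)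
    have h2 : ccdf f (chainFn f B) * (1/Real.exp 1) ≤ B * (1/Real.exp 1) :=
      mul_le_mul_of_nonneg_right hFs (by positivity)
    nlinarith [hBB]
  rw [← ENNReal.ofReal_sub _ hsnn, ← ENNReal.ofReal_mul hA]
  exact ENNReal.ofReal_le_ofReal hreal

end chaining3


lemma ballMass_nonneg {X : Type*} [MetricSpace X] [Fintype X] {μ : X → ℝ}
    (hμ : ∀ x, 0 ≤ μ x) (x : X) (ρ : ℝ) : 0 ≤ ballMass μ x ρ :=
  Finset.sum_nonneg (fun y _ => hμ y)


/-- for probability measures `μ, ν` on a finite metric space `X` and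
`r > 0`, `Σ_x ν(x)·h(ν(B(x,2r))) ≤ Σ_x ν(x)·h(μ(B(x,r))) + 1/e`
(with `0·∞ = 0` and `h(0) = lim_{p→0⁺} h(p)`). -/
theorem stmt2 {X : Type*} [MetricSpace X] [Fintype X]
    (f : ℝ → ℝ) (hf : IsChainingDensity f)
    (μ ν : X → ℝ) (hμ : IsProbOn μ) (hν : IsProbOn ν) (r : ℝ) (hr : 0 < r) :
    (∑ x, ENNReal.ofReal (ν x) * chainFnE f (ballMass ν x (2 * r))) ≤
      (∑ x, ENNReal.ofReal (ν x) * chainFnE f (ballMass μ x r)) +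
        ENNReal.ofReal (1 / Real.exp 1) := by
  classical
  obtain ⟨hμ0, hμ1⟩ := hμ
  obtain ⟨hν0, hν1⟩ := hν
  have main : ∀ n (T : Finset X),
      T.card ≤ n →
      (∑ x ∈ T, ENNReal.ofReal (ν x) * chainFnE f (ballMass ν x (2 * r))) ≤
        (∑ x ∈ T, ENNReal.ofReal (ν x) * chainFnE f (ballMass μ x r)) +
          ENNReal.ofReal
              (∑ y ∈ T.biUnion (fun x => Finset.univ.filter (fun y => dist x y ≤ r)), μ y) *
            ENNReal.ofReal (1 / Real.exp 1) := by
    intro n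
    induction n with
    | zero =>
      intro T hT
      rw [Finset.card_eq_zero.mp (Nat.le_zero.mp hT)]
      simp
    | succ n ih =>
      intro T hT
      rcases T.eq_empty_or_nonempty with rfl | hTne
      · simp
      obtain ⟨x₀, hx₀T, hx₀max⟩ := T.exists_max_image
        (fun x => chainFnE f (ballMass ν x (2 * r)) - chainFnE f (ballMass μ x r)) hTne
      set C := T.filter (fun x => dist x₀ x ≤ 2 * r) with hCdef
      set T' := T \ C with hT'def
      have hx₀C : x₀ ∈ C := Finset.mem_filter.mpr ⟨hx₀T, by simp [dist_self]; linarith⟩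
      have hT'card : T'.card ≤ n := by
        have hsub : T' ⊆ T.erase x₀ := by
          intro x hx
          rw [hT'def, Finset.mem_sdiff] at hx
          refine Finset.mem_erase.mpr ⟨?_, hx.1⟩
          rintro rfl
          exact hx.2 hx₀C
        calc T'.card ≤ (T.erase x₀).card := Finset.card_le_card hsub
          _ = T.card - 1 := Finset.card_erase_of_mem hx₀T
          _ ≤ n := by omega
      have hsplitT : ∀ g : X → ENNReal, ∑ x ∈ T, g x = ∑ x ∈ C, g x + ∑ x ∈ T', g x := by
        intro g
        have hU : C ∪ T' = T := by
          rw [hT'def]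
          exact Finset.union_sdiff_of_subset (Finset.filter_subset _ _)
        rw [← hU, Finset.sum_union (Finset.disjoint_sdiff)]
      -- bound on the cluster C
      have hCsum : (∑ x ∈ C, ENNReal.ofReal (ν x) * chainFnE f (ballMass ν x (2 * r)))
          ≤ (∑ x ∈ C, ENNReal.ofReal (ν x) * chainFnE f (ballMass μ x r))
            + ENNReal.ofReal (ballMass μ x₀ r) * ENNReal.ofReal (1 / Real.exp 1) := by
        have hterm : ∀ x ∈ C,
            ENNReal.ofReal (ν x) * chainFnE f (ballMass ν x (2 * r))
              ≤ ENNReal.ofReal (ν x) * chainFnE f (ballMass μ x r)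
                + ENNReal.ofReal (ν x) *
                  (chainFnE f (ballMass ν x₀ (2 * r)) - chainFnE f (ballMass μ x₀ r)) := by
          intro x hx
          have h1 : chainFnE f (ballMass ν x (2 * r))
              ≤ chainFnE f (ballMass μ x r)
                + (chainFnE f (ballMass ν x (2 * r)) - chainFnE f (ballMass μ x r)) :=
            le_add_tsub
          have h2 := hx₀max x (Finset.mem_of_mem_filter x hx)
          have h3 : chainFnE f (ballMass ν x (2 * r))
              ≤ chainFnE f (ballMass μ x r)
                + (chainFnE f (ballMass ν x₀ (2 * r)) - chainFnE f (ballMass μ x₀ r)) :=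
            h1.trans (add_le_add_right h2 _)
          calc ENNReal.ofReal (ν x) * chainFnE f (ballMass ν x (2 * r))
              ≤ ENNReal.ofReal (ν x) * (chainFnE f (ballMass μ x r)
                + (chainFnE f (ballMass ν x₀ (2 * r)) - chainFnE f (ballMass μ x₀ r))) :=
              mul_le_mul_right h3 _
            _ = _ := mul_add _ _ _
        have hmass : (∑ x ∈ C, ENNReal.ofReal (ν x))
            ≤ ENNReal.ofReal (ballMass ν x₀ (2 * r)) := by
          rw [← ENNReal.ofReal_sum_of_nonneg (fun i _ => hν0 i)]
          apply ENNReal.ofReal_le_ofReal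
          apply Finset.sum_le_sum_of_subset_of_nonneg
          · intro x hx
            rw [hCdef, Finset.mem_filter] at hx
            exact Finset.mem_filter.mpr ⟨Finset.mem_univ x, hx.2⟩
          · intro y _ _
            exact hν0 y
        calc (∑ x ∈ C, ENNReal.ofReal (ν x) * chainFnE f (ballMass ν x (2 * r)))
            ≤ ∑ x ∈ C, (ENNReal.ofReal (ν x) * chainFnE f (ballMass μ x r)
              + ENNReal.ofReal (ν x) *
                (chainFnE f (ballMass ν x₀ (2 * r)) - chainFnE f (ballMass μ x₀ r))) :=
            Finset.sum_le_sum hterm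
          _ = (∑ x ∈ C, ENNReal.ofReal (ν x) * chainFnE f (ballMass μ x r))
              + (∑ x ∈ C, ENNReal.ofReal (ν x)) *
                (chainFnE f (ballMass ν x₀ (2 * r)) - chainFnE f (ballMass μ x₀ r)) := by
            rw [Finset.sum_add_distrib, Finset.sum_mul]
          _ ≤ (∑ x ∈ C, ENNReal.ofReal (ν x) * chainFnE f (ballMass μ x r))
              + ENNReal.ofReal (ballMass ν x₀ (2 * r)) *
                (chainFnE f (ballMass ν x₀ (2 * r)) - chainFnE f (ballMass μ x₀ r)) :=
            add_le_add_right (mul_le_mul_left hmass _) _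
          _ ≤ (∑ x ∈ C, ENNReal.ofReal (ν x) * chainFnE f (ballMass μ x r))
              + ENNReal.ofReal (ballMass μ x₀ r * (1 / Real.exp 1)) :=
            add_le_add_right (keyK hf (ballMass_nonneg hν0 x₀ (2*r)) (ballMass_nonneg hμ0 x₀ r)) _
          _ = _ := by
            rw [ENNReal.ofReal_mul (ballMass_nonneg hμ0 x₀ r)]
      -- disjointness of the r-neighborhoods
      have hdisj : Disjoint (Finset.univ.filter (fun y => dist x₀ y ≤ r))
          (T'.biUnion (fun x => Finset.univ.filter (fun y => dist x y ≤ r))) := by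
        rw [Finset.disjoint_left]
        intro y hy hy'
        obtain ⟨x', hx'T', hx'y⟩ := Finset.mem_biUnion.mp hy'
        have h1 : dist x₀ y ≤ r := (Finset.mem_filter.mp hy).2
        have h2 : dist x' y ≤ r := (Finset.mem_filter.mp hx'y).2
        rw [hT'def, Finset.mem_sdiff] at hx'T'
        apply hx'T'.2
        refine Finset.mem_filter.mpr ⟨hx'T'.1, ?_⟩
        calc dist x₀ x' ≤ dist x₀ y + dist y x' := dist_triangle _ _ _
          _ ≤ r + r := add_le_add h1 (by rw [dist_comm]; exact h2)
          _ = 2 * r := by ring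
      have hμsum : ballMass μ x₀ r
            + (∑ y ∈ T'.biUnion (fun x => Finset.univ.filter (fun y => dist x y ≤ r)), μ y)
          ≤ ∑ y ∈ T.biUnion (fun x => Finset.univ.filter (fun y => dist x y ≤ r)), μ y := by
        rw [ballMass, ← Finset.sum_union hdisj]
        apply Finset.sum_le_sum_of_subset_of_nonneg
        · apply Finset.union_subset
          · intro y hy
            exact Finset.mem_biUnion.mpr ⟨x₀, hx₀T, hy⟩
          · intro y hy
            obtain ⟨x', hx'T', hx'y⟩ := Finset.mem_biUnion.mp hy
            rw [hT'def, Finset.mem_sdiff] at hx'T'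
            exact Finset.mem_biUnion.mpr ⟨x', hx'T'.1, hx'y⟩
        · intro y _ _
          exact hμ0 y
      have hIH := ih T' hT'card
      rw [hsplitT (fun x => ENNReal.ofReal (ν x) * chainFnE f (ballMass ν x (2 * r))),
        hsplitT (fun x => ENNReal.ofReal (ν x) * chainFnE f (ballMass μ x r))]
      calc (∑ x ∈ C, ENNReal.ofReal (ν x) * chainFnE f (ballMass ν x (2 * r)))
            + (∑ x ∈ T', ENNReal.ofReal (ν x) * chainFnE f (ballMass ν x (2 * r)))
          ≤ ((∑ x ∈ C, ENNReal.ofReal (ν x) * chainFnE f (ballMass μ x r))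
              + ENNReal.ofReal (ballMass μ x₀ r) * ENNReal.ofReal (1 / Real.exp 1))
            + ((∑ x ∈ T', ENNReal.ofReal (ν x) * chainFnE f (ballMass μ x r))
              + ENNReal.ofReal
                  (∑ y ∈ T'.biUnion (fun x => Finset.univ.filter (fun y => dist x y ≤ r)), μ y) *
                ENNReal.ofReal (1 / Real.exp 1)) := add_le_add hCsum hIH
        _ = ((∑ x ∈ C, ENNReal.ofReal (ν x) * chainFnE f (ballMass μ x r))
              + (∑ x ∈ T', ENNReal.ofReal (ν x) * chainFnE f (ballMass μ x r)))
            + (ENNReal.ofReal (ballMass μ x₀ r)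
              + ENNReal.ofReal
                  (∑ y ∈ T'.biUnion (fun x => Finset.univ.filter (fun y => dist x y ≤ r)), μ y)) *
              ENNReal.ofReal (1 / Real.exp 1) := by
          ring
        _ ≤ _ := by
          apply add_le_add_right
          apply mul_le_mul_left
          rw [← ENNReal.ofReal_add (ballMass_nonneg hμ0 x₀ r)
            (Finset.sum_nonneg (fun y _ => hμ0 y))]
          exact ENNReal.ofReal_le_ofReal hμsum
  have hfinal := main Finset.univ.card Finset.univ le_rfl
  refine hfinal.trans ?_
  apply add_le_add_right
  have h1 : (∑ y ∈ Finset.univ.biUnion (fun x => Finset.univ.filter (fun y => dist x y ≤ r)), μ y)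
      ≤ 1 := by
    rw [← hμ1]
    exact Finset.sum_le_sum_of_subset_of_nonneg (Finset.subset_univ _) (fun y _ _ => hμ0 y)
  calc ENNReal.ofReal
        (∑ y ∈ Finset.univ.biUnion (fun x => Finset.univ.filter (fun y => dist x y ≤ r)), μ y) *
        ENNReal.ofReal (1 / Real.exp 1)
      ≤ ENNReal.ofReal 1 * ENNReal.ofReal (1 / Real.exp 1) :=
        mul_le_mul_left (ENNReal.ofReal_le_ofReal h1) _
    _ = ENNReal.ofReal (1 / Real.exp 1) := by rw [ENNReal.ofReal_one, one_mul]
end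
end
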